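/- Let σ_w > 0 and σ_q > 0 be fixed. Let (P_n) be a sequence of positive reals with P_n → ∞, and for each n let r_n ≥ 0 satisfy σ_w·√(2^{2r_n} − 1) = √(P_n) − σ_q·(1 + 2^{r_n}). Then r_n / log₂(√(P_n)/(σ_w + σ_q)) → 1 as n → ∞. -/

import Mathlib

open Filter

/-- For fixed `σ_w, σ_q > 0`, if `P_n → ∞` and each `r_n ≥ 0` solves
`σ_w·√(2^{2r_n} − 1) = √P_n − σ_q·(1 + 2^{r_n})`, then
`r_n / log₂(√P_n/(σ_w + σ_q)) → 1`. -/
theorem rq_high_power_asymptotics (σw σq : ℝ) (hw : 0 < σw) (hq : 0 < σq)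
    (P : ℕ → ℝ) (hPpos : ∀ n, 0 < P n)
    (hP : Tendsto P atTop atTop)
    (r : ℕ → ℝ) (hr0 : ∀ n, 0 ≤ r n)
    (hr : ∀ n, σw * Real.sqrt ((2 : ℝ) ^ (2 * r n) - 1) =
      Real.sqrt (P n) - σq * (1 + (2 : ℝ) ^ r n)) :
    Tendsto (fun n => r n / Real.logb 2 (Real.sqrt (P n) / (σw + σq)))
      atTop (nhds 1) := by
  set a : ℝ := σw + σq with ha
  have hapos : 0 < a := by positivity
  set s : ℕ → ℝ := fun n => Real.sqrt (P n) with hs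
  have hspos : ∀ n, 0 < s n := fun n => Real.sqrt_pos.mpr (hPpos n)
  set x : ℕ → ℝ := fun n => (2 : ℝ) ^ (r n) with hx
  have hx1 : ∀ n, 1 ≤ x n := by
    intro n
    have := Real.rpow_le_rpow_of_exponent_le (x := (2:ℝ)) one_le_two (hr0 n)
    simpa using this
  have hxpos : ∀ n, 0 < x n := fun n => lt_of_lt_of_le one_pos (hx1 n)
  -- key inequalities
  have key : ∀ n, s n - σq ≤ a * x n ∧ a * x n ≤ s n + σw - σq := by
    intro n
    have hxn := hx1 n
    have hx2 : (2 : ℝ) ^ (2 * r n) = x n ^ 2 := by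
      rw [hx, two_mul, Real.rpow_add two_pos]; ring
    have heq := hr n
    rw [hx2] at heq
    have hsq_le : Real.sqrt (x n ^ 2 - 1) ≤ x n := by
      have h := Real.sqrt_le_sqrt (show x n ^ 2 - 1 ≤ x n ^ 2 by linarith)
      rwa [Real.sqrt_sq (by linarith)] at h
    have hsq_ge : x n - 1 ≤ Real.sqrt (x n ^ 2 - 1) := by
      have h1 : (x n - 1) ^ 2 ≤ x n ^ 2 - 1 := by nlinarith
      have h := Real.sqrt_le_sqrt h1
      rwa [Real.sqrt_sq (by linarith)] at h
    have hmul1 : σw * Real.sqrt (x n ^ 2 - 1) ≤ σw * x n :=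
      mul_le_mul_of_nonneg_left hsq_le hw.le
    have hmul2 : σw * (x n - 1) ≤ σw * Real.sqrt (x n ^ 2 - 1) :=
      mul_le_mul_of_nonneg_left hsq_ge hw.le
    constructor
    · nlinarith
    · nlinarith
  set t : ℕ → ℝ := fun n => a * x n / s n with ht
  have htpos : ∀ n, 0 < t n := fun n => div_pos (by positivity) (hspos n)
  -- s → ∞
  have hsA : Tendsto s atTop atTop := by
    have h := (tendsto_rpow_atTop (y := (1:ℝ)/2) (by norm_num)).comp hP
    apply h.congr
    intro n
    simp [hs, Real.sqrt_eq_rpow, Function.comp]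
  -- t → 1 by squeeze
  have ht1 : Tendsto t atTop (nhds 1) := by
    have hlo : Tendsto (fun n => 1 - σq / s n) atTop (nhds 1) := by
      have h0 : Tendsto (fun n => σq / s n) atTop (nhds 0) :=
        Tendsto.div_atTop tendsto_const_nhds hsA
      simpa using tendsto_const_nhds.sub h0
    have hhi : Tendsto (fun n => 1 + (σw - σq) / s n) atTop (nhds 1) := by
      have h0 : Tendsto (fun n => (σw - σq) / s n) atTop (nhds 0) :=
        Tendsto.div_atTop tendsto_const_nhds hsA
      simpa using tendsto_const_nhds.add h0
    refine tendsto_of_tendsto_of_tendsto_of_le_of_le hlo hhi ?_ ?_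
    · intro n
      have hsn := hspos n
      calc (1 : ℝ) - σq / s n = (s n - σq) / s n := by field_simp
        _ ≤ a * x n / s n := by
            exact (div_le_div_iff_of_pos_right hsn).mpr (key n).1
    · intro n
      have hsn := hspos n
      calc t n = a * x n / s n := rfl
        _ ≤ (s n + σw - σq) / s n := (div_le_div_iff_of_pos_right hsn).mpr (key n).2
        _ = 1 + (σw - σq) / s n := by field_simp; ring
  -- logb 2 (t n) → 0
  have hlogt : Tendsto (fun n => Real.logb 2 (t n)) atTop (nhds 0) := by
    have hlog : Tendsto (fun n => Real.log (t n)) atTop (nhds 0) := by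
      have := (Real.continuousAt_log one_ne_zero).tendsto.comp ht1
      simpa [Function.comp_def] using this
    have := hlog.div_const (Real.log 2)
    simpa [Real.logb] using this
  -- L → ∞
  set L : ℕ → ℝ := fun n => Real.logb 2 (s n / a) with hL
  have hLA : Tendsto L atTop atTop :=
    (Real.tendsto_logb_atTop one_lt_two).comp (hsA.atTop_div_const hapos)
  have hLinv : Tendsto (fun n => (L n)⁻¹) atTop (nhds 0) :=
    hLA.inv_tendsto_atTop
  -- main limit
  have hmain : Tendsto (fun n => 1 + Real.logb 2 (t n) * (L n)⁻¹) atTop (nhds 1) := by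
    have h := hlogt.mul hLinv
    have h2 := (tendsto_const_nhds : Tendsto (fun _ : ℕ => (1:ℝ)) atTop (nhds 1)).add h
    simpa using h2
  refine hmain.congr' ?_
  have hev : ∀ᶠ n in atTop, a < s n := hsA.eventually_gt_atTop a
  filter_upwards [hev] with n hn
  have hsn := hspos n
  have hLpos : 0 < L n :=
    Real.logb_pos one_lt_two (by rw [lt_div_iff₀ hapos]; linarith)
  have hrx : r n = Real.logb 2 (x n) := by
    rw [hx]
    exact (Real.logb_rpow (by norm_num) (by norm_num)).symm
  have hsplit : Real.logb 2 (x n) = Real.logb 2 (t n) + L n := by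
    have hxe : x n = t n * (s n / a) := by
      rw [ht]
      field_simp
    rw [hxe, Real.logb_mul (ne_of_gt (htpos n)) (ne_of_gt (div_pos hsn hapos))]
  have : r n / L n = 1 + Real.logb 2 (t n) * (L n)⁻¹ := by
    rw [hrx, hsplit]
    field_simp
    ring
  simpa [hL, hs, ha] using this.symm
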